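/- Let G be a finite simple graph with vertex set V and let S ⊆ V be a distinguishing set, i.e., for all distinct u, v ∈ V with u ∉ S and v ∉ S, one has N(u) ∩ S ≠ N(v) ∩ S. Define colorings by χ₀(v) = Sum.inl v if v ∈ S and χ₀(v) = Sum.inr (deg v) if v ∉ S, and for each r, χ_{r+1}(v) = (χ_r(v), { χ_r(w) : w ∈ N(v) }). Then χ₂ is injective; that is, after individualizing the vertices of S, two rounds of count-free Color Refinement assign every vertex of G a unique color. -/
import Mathlib


/-- Round 0 of count-free Color Refinement after individualizing `S`: each vertex of `S`
gets its own unique color, and each vertex outside `S` is colored by its degree. -/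
def cfcrChi0 {V : Type*} [Fintype V] [DecidableEq V] (G : SimpleGraph V)
    [DecidableRel G.Adj] (S : Finset V) : V → V ⊕ ℕ :=
  fun v => if v ∈ S then Sum.inl v else Sum.inr (G.degree v)

/-- Round 1 of count-free Color Refinement: the new color of `v` is the pair of its old color
and the *set* of old colors of its neighbors. -/
def cfcrChi1 {V : Type*} [Fintype V] [DecidableEq V] (G : SimpleGraph V)
    [DecidableRel G.Adj] (S : Finset V) : V → (V ⊕ ℕ) × Set (V ⊕ ℕ) :=
  fun v => (cfcrChi0 G S v, cfcrChi0 G S '' G.neighborSet v)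

/-- Round 2 of count-free Color Refinement. -/
def cfcrChi2 {V : Type*} [Fintype V] [DecidableEq V] (G : SimpleGraph V)
    [DecidableRel G.Adj] (S : Finset V) :
    V → ((V ⊕ ℕ) × Set (V ⊕ ℕ)) × Set ((V ⊕ ℕ) × Set (V ⊕ ℕ)) :=
  fun v => (cfcrChi1 G S v, cfcrChi1 G S '' G.neighborSet v)

/-- Let `G` be a finite simple graph and `S` a distinguishing set: for all distinct vertices
`u, v ∉ S` we have `N(u) ∩ S ≠ N(v) ∩ S`.  Then after individualizing the vertices of `S`,
two rounds of count-free Color Refinement assign every vertex of `G` a unique color, i.e.,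
`χ₂` is injective. -/
theorem distinguishingSet_countFree_colorRefinement_injective
    (V : Type*) [Fintype V] [DecidableEq V] (G : SimpleGraph V) [DecidableRel G.Adj]
    (S : Finset V)
    (hS : ∀ u v : V, u ≠ v → u ∉ S → v ∉ S →
      (G.neighborSet u ∩ (S : Set V)) ≠ (G.neighborSet v ∩ (S : Set V))) :
    Function.Injective (cfcrChi2 G S) := by
  have h1 : Function.Injective (cfcrChi1 G S) := by
    intro u v h
    have h0 : cfcrChi0 G S u = cfcrChi0 G S v := congrArg Prod.fst h
    have hnb : cfcrChi0 G S '' G.neighborSet u = cfcrChi0 G S '' G.neighborSet v :=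
      congrArg Prod.snd h
    by_cases hu : u ∈ S <;> by_cases hv : v ∈ S
    · simpa [cfcrChi0, hu, hv] using h0
    · simp [cfcrChi0, hu, hv] at h0
    · simp [cfcrChi0, hu, hv] at h0
    · by_contra hne
      apply hS u v hne hu hv
      have key : ∀ a b : V, a ∉ S → b ∉ S →
          cfcrChi0 G S '' G.neighborSet a = cfcrChi0 G S '' G.neighborSet b →
          G.neighborSet a ∩ (S : Set V) ⊆ G.neighborSet b ∩ (S : Set V) := by
        intro a b _ _ hab x hx
        obtain ⟨hxN, hxS⟩ := hx
        have hxS' : x ∈ S := hxS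
        have : cfcrChi0 G S x ∈ cfcrChi0 G S '' G.neighborSet b := by
          rw [← hab]; exact ⟨x, hxN, rfl⟩
        obtain ⟨w, hwN, hw⟩ := this
        have hxcol : cfcrChi0 G S x = Sum.inl x := by simp [cfcrChi0, hxS']
        rw [hxcol] at hw
        by_cases hwS : w ∈ S
        · simp only [cfcrChi0, if_pos hwS] at hw
          obtain rfl : w = x := Sum.inl.inj hw
          exact ⟨hwN, hxS⟩
        · simp [cfcrChi0, hwS] at hw
      exact Set.Subset.antisymm (key u v hu hv hnb) (key v u hv hu hnb.symm)
  intro u v h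
  exact h1 (congrArg Prod.fst h)
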